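/- Let 0 < ω < 1, 0 < ω' < 1 and −1 < δ < 1, and set u := 1 − ω − ω'. Assume ω − ω' < δ and u ≥ 0. Then the quadratic polynomial ω(1−δ)x² − uδx − ω'(1+δ) has exactly one strictly positive root E; this E is the unique strictly positive solution of the equation (ωx − ω'x⁻¹)/(ωx + ω'x⁻¹ + u) = δ, and E > 1. -/

import Mathlib

/-- Let `0 < ω < 1`, `0 < ω' < 1`, `−1 < δ < 1`, `u = 1 − ω − ω'`,
and assume `ω − ω' < δ` and `u ≥ 0`. Then the quadratic
`ω(1−δ)x² − uδx − ω'(1+δ)` has exactly one strictly positive root `E`; this `E` is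
the unique strictly positive solution of `(ωx − ω'x⁻¹)/(ωx + ω'x⁻¹ + u) = δ`,
and `E > 1`. -/
theorem stmt_17 (ω ω' δ u : ℝ)
    (hω : 0 < ω) (hω1 : ω < 1) (hω' : 0 < ω') (hω'1 : ω' < 1)
    (hδ : -1 < δ) (hδ1 : δ < 1) (hu : u = 1 - ω - ω')
    (hlt : ω - ω' < δ) (hu0 : 0 ≤ u) :
    ∃ E : ℝ, 0 < E ∧
      ω * (1 - δ) * E ^ 2 - u * δ * E - ω' * (1 + δ) = 0 ∧
      (∀ x : ℝ, 0 < x → ω * (1 - δ) * x ^ 2 - u * δ * x - ω' * (1 + δ) = 0 → x = E) ∧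
      (ω * E - ω' * E⁻¹) / (ω * E + ω' * E⁻¹ + u) = δ ∧
      (∀ x : ℝ, 0 < x → (ω * x - ω' * x⁻¹) / (ω * x + ω' * x⁻¹ + u) = δ → x = E) ∧
      1 < E := by
  have h1δ : 0 < 1 - δ := by linarith
  have h1δ' : 0 < 1 + δ := by linarith
  have ha : 0 < ω * (1 - δ) := by positivity
  have hc : 0 < ω' * (1 + δ) := by positivity
  set a : ℝ := ω * (1 - δ) with hadef
  set c : ℝ := ω' * (1 + δ) with hcdef
  set D : ℝ := (u * δ) ^ 2 + 4 * a * c with hDdef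
  clear_value a c D
  have hDpos : 0 < D := by rw [hDdef, hadef, hcdef]; positivity
  have hsD : Real.sqrt D ^ 2 = D := Real.sq_sqrt hDpos.le
  have hs0 : 0 ≤ Real.sqrt D := Real.sqrt_nonneg D
  have habs : |u * δ| < Real.sqrt D := by
    nlinarith [sq_abs (u * δ), abs_nonneg (u * δ)]
  have hsgt : u * δ < Real.sqrt D := lt_of_le_of_lt (le_abs_self _) habs
  have hnum : 0 < u * δ + Real.sqrt D := by
    have := neg_abs_le (u * δ); linarith
  set E : ℝ := (u * δ + Real.sqrt D) / (2 * a) with hEdef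
  have hE0 : 0 < E := by positivity
  have h2 : 2 * a * E = u * δ + Real.sqrt D := by
    rw [hEdef]; field_simp
  clear_value E
  have h3 : (2 * a * E - u * δ) ^ 2 = (u * δ) ^ 2 + 4 * a * c := by
    rw [show 2 * a * E - u * δ = Real.sqrt D by linarith]
    rw [hsD]
    exact hDdef
  have key : a * E ^ 2 - u * δ * E - c = 0 := by
    have h4 : (4 * a) * (a * E ^ 2 - u * δ * E - c) = 0 := by linear_combination h3
    exact (mul_eq_zero.1 h4).resolve_left (by positivity : (0:ℝ) < 4 * a).ne'
  have hfac2 : 0 < a * E - u * δ := by linarith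
  have huniq : ∀ x : ℝ, 0 < x → a * x ^ 2 - u * δ * x - c = 0 → x = E := by
    intro x hx heq
    have hfac : (x - E) * (a * (x + E) - u * δ) = 0 := by linear_combination heq - key
    have hpos : 0 < a * (x + E) - u * δ := by nlinarith
    rcases mul_eq_zero.1 hfac with h | h
    · linarith
    · linarith
  have hE1 : 1 < E := by
    have hf1 : a - u * δ - c < 0 := by
      have : a - u * δ - c = ω - ω' - δ * (ω + ω' + u) := by rw [hadef, hcdef]; ring
      rw [this, hu]; nlinarith
    have hq : (E - 1) * (a * (E + 1) - u * δ) = -(a - u * δ - c) := by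
      linear_combination key
    have hpos2 : 0 < a * (E + 1) - u * δ := by linarith
    have h5 : 0 < (E - 1) * (a * (E + 1) - u * δ) := by rw [hq]; linarith
    rcases mul_pos_iff.1 h5 with ⟨h, _⟩ | ⟨_, h⟩
    · linarith
    · linarith
  have hden : 0 < ω * E + ω' * E⁻¹ + u := by positivity
  have hdE : ω * E - ω' * E⁻¹ = δ * (ω * E + ω' * E⁻¹ + u) := by
    rw [eq_comm, ← sub_eq_zero]
    have hE0' : E ≠ 0 := hE0.ne'
    field_simp
    linear_combination -key + E ^ 2 * hadef - hcdef
  refine ⟨E, hE0, key, huniq, ?_, ?_, hE1⟩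
  · rw [hdE, mul_div_assoc, div_self hden.ne', mul_one]
  · intro x hx heq
    have hdenx : 0 < ω * x + ω' * x⁻¹ + u := by positivity
    rw [div_eq_iff hdenx.ne'] at heq
    apply huniq x hx
    have hx0 : x ≠ 0 := hx.ne'
    field_simp at heq
    linear_combination heq + x ^ 2 * hadef - hcdef
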